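/- arXiv:1607.01551 — 2 statements merged into one kernel-verified Lean document; each statement's English description precedes it below -/
import Mathlib

section
/- Let $A \in \mathbb{R}^{m \times n}$ and let $[m] = \mathcal{P}_1 \uplus \cdots \uplus \mathcal{P}_p$ be a partition into disjoint parts with $|\mathcal{P}_l| = m_l$. Write the multivariate characteristic polynomial $\det(AA^T - x_1 I_1 - \cdots - x_p I_p) = \sum_{i_1=0}^{m_1} \cdots \sum_{i_p=0}^{m_p} c_{i_1,\dots,i_p} x_1^{i_1} \cdots x_p^{i_p}$, where $I_l$ is the $m \times m$ diagonal 0/1 matrix with $(I_l)_{i,i}=1$ iff $i \in \mathcal{P}_l$. Then for any integers $0 \le k_l \le m_l$ ($1 \le l \le p$), with $k = \sum_{l=1}^p k_l$, one has $c_{m_1-k_1,\dots,m_p-k_p} = (-1)^{m-k} \sum_{S} \det(A_S A_S^T)$, where the sum runs over all $S \subseteq [m]$ with $|S \cap \mathcal{P}_l| = k_l$ for every $1 \le l \le p$. -/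
open scoped Matrix

/-- `det(A_S A_S^T)`, i.e. the determinant of the principal submatrix `(AA^T)_{S,S}`. -/
noncomputable def subDet {m n : ℕ} (A : Matrix (Fin m) (Fin n) ℝ) (S : Finset (Fin m)) : ℝ :=
  Matrix.det ((A * Aᵀ).submatrix (fun i : {x // x ∈ S} => i.1) (fun j : {x // x ∈ S} => j.1))

/-- The coefficient `c_{e₁,…,e_p}` of the monomial `x₁^{e₁} ⋯ x_p^{e_p}` in the multivariate
characteristic polynomial `det(M - x₁I₁ - ⋯ - x_pI_p)` of a square matrix `M`, where the
partition `[m] = 𝒫₁ ⊎ ⋯ ⊎ 𝒫_p` is encoded by the labelling function `part` (so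
`𝒫_l = part⁻¹(l)`), and `I_l` is the diagonal 0/1 matrix supported on `𝒫_l`. -/
noncomputable def mcharCoeff {m p : ℕ} (M : Matrix (Fin m) (Fin m) ℝ) (part : Fin m → Fin p)
    (e : Fin p → ℕ) : ℝ :=
  MvPolynomial.coeff (Finsupp.equivFunOnFinite.symm e)
    (Matrix.det (Matrix.of fun i j =>
      MvPolynomial.C (M i j) - (if i = j then MvPolynomial.X (part i) else 0)))

lemma det_expand {m p : ℕ} (M : Matrix (Fin m) (Fin m) ℝ) (part : Fin m → Fin p) :
    (Matrix.det (Matrix.of fun i j =>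
      MvPolynomial.C (M i j) - (if i = j then MvPolynomial.X (part i) else 0)))
    = ∑ S : Finset (Fin m),
        MvPolynomial.C (Matrix.det (M.submatrix (fun i : {x // x ∈ S} => i.1)
            (fun j : {x // x ∈ S} => j.1)))
          * ∏ i ∈ Sᶜ, (-MvPolynomial.X (part i)) := by
  classical
  set R := MvPolynomial (Fin p) ℝ
  set a : Fin m → (Fin m → R) := fun i j => MvPolynomial.C (M i j) with ha
  set b : Fin m → (Fin m → R) := fun i j => -(if i = j then MvPolynomial.X (part i) else 0) with hb
  have h1 : (Matrix.of fun i j =>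
      MvPolynomial.C (M i j) - (if i = j then MvPolynomial.X (part i) else 0)) = Matrix.of (a + b) := by
    ext i j; simp [ha, hb, sub_eq_add_neg]
  rw [h1]
  have h2 : (Matrix.of (a + b)).det
      = ∑ S : Finset (Fin m), (Matrix.of (S.piecewise a b)).det := by
    exact (Matrix.detRowAlternating.toMultilinearMap).map_add_univ a b
  rw [h2]
  refine Finset.sum_congr rfl fun S _ => ?_
  set e : {x // x ∈ S} ⊕ {x // ¬ x ∈ S} ≃ Fin m := Equiv.sumCompl (fun x => x ∈ S)
  rw [← Matrix.det_submatrix_equiv_self e]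
  have h3 : (Matrix.of (S.piecewise a b)).submatrix e e
      = Matrix.fromBlocks
          ((M.submatrix (fun i : {x // x ∈ S} => i.1) (fun j : {x // x ∈ S} => j.1)).map
            MvPolynomial.C)
          (Matrix.of fun (i : {x // x ∈ S}) (j : {x // ¬ x ∈ S}) => MvPolynomial.C (M i.1 j.1))
          0
          (Matrix.diagonal fun i : {x // ¬ x ∈ S} => -MvPolynomial.X (part i.1)) := by
    apply Matrix.ext
    rintro (⟨i, hi⟩ | ⟨i, hi⟩) (⟨j, hj⟩ | ⟨j, hj⟩) <;>
      simp only [Matrix.submatrix_apply, Matrix.of_apply, Finset.piecewise, e,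
        Equiv.sumCompl_apply_inl, Equiv.sumCompl_apply_inr, hi, hj, if_pos, if_neg, if_false, if_true, Matrix.fromBlocks_apply₁₁, Matrix.fromBlocks_apply₁₂,
        Matrix.fromBlocks_apply₂₁, Matrix.fromBlocks_apply₂₂, Matrix.map_apply,
        Matrix.diagonal_apply, Matrix.zero_apply, ha, hb, ite_not]
    · rw [if_neg (by rintro rfl; exact hi hj), neg_zero]
    · by_cases h : i = j
      · subst h; simp
      · rw [if_neg h, if_neg (by simpa [Subtype.ext_iff] using h), neg_zero]
  rw [h3, Matrix.det_fromBlocks_zero₂₁, Matrix.det_diagonal, ← RingHom.mapMatrix_apply, ← RingHom.map_det]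
  congr 1
  rw [Finset.prod_subtype Sᶜ (fun x => Finset.mem_compl) (fun i => -MvPolynomial.X (part i))]

/-- for `A ∈ ℝ^{m×n}` and a partition `[m] = 𝒫₁ ⊎ ⋯ ⊎ 𝒫_p` with `|𝒫_l| = m_l`,
and any `0 ≤ k_l ≤ m_l` with `k = ∑ k_l`, the coefficient `c_{m₁-k₁,…,m_p-k_p}` of the
multivariate characteristic polynomial of `AA^T` equals
`(-1)^{m-k} ∑_{S : |S ∩ 𝒫_l| = k_l ∀l} det(A_S A_S^T)`. -/
theorem statement1 {m n p : ℕ} (A : Matrix (Fin m) (Fin n) ℝ) (part : Fin m → Fin p)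
    (mi ki : Fin p → ℕ)
    (hmi : ∀ l, (Finset.univ.filter (fun i => part i = l)).card = mi l)
    (hki : ∀ l, ki l ≤ mi l) :
    mcharCoeff (A * Aᵀ) part (fun l => mi l - ki l)
      = (-1 : ℝ) ^ (m - ∑ l, ki l) *
        ∑ S ∈ Finset.univ.filter
            (fun S : Finset (Fin m) => ∀ l, (S.filter (fun i => part i = l)).card = ki l),
          subDet A S := by
  classical
  set μ : Fin p →₀ ℕ := Finsupp.equivFunOnFinite.symm (fun l => mi l - ki l) with hμ
  rw [mcharCoeff, det_expand (A * Aᵀ) part, MvPolynomial.coeff_sum]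
  have key : ∀ S : Finset (Fin m),
      MvPolynomial.coeff μ (MvPolynomial.C (subDet A S) * ∏ i ∈ Sᶜ, (-MvPolynomial.X (part i)))
      = if (∀ l, (S.filter (fun i => part i = l)).card = ki l) then
          (-1 : ℝ) ^ (m - ∑ l, ki l) * subDet A S else 0 := by
    intro S
    have hprod : (∏ i ∈ Sᶜ, (-MvPolynomial.X (part i) : MvPolynomial (Fin p) ℝ))
        = MvPolynomial.C ((-1 : ℝ) ^ Sᶜ.card) *
          MvPolynomial.monomial (∑ i ∈ Sᶜ, Finsupp.single (part i) 1) 1 := by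
      calc (∏ i ∈ Sᶜ, (-MvPolynomial.X (part i) : MvPolynomial (Fin p) ℝ))
          = ∏ i ∈ Sᶜ, ((-1 : MvPolynomial (Fin p) ℝ) * MvPolynomial.X (part i)) := by
            refine Finset.prod_congr rfl fun i _ => ?_; ring
        _ = (∏ _i ∈ Sᶜ, (-1 : MvPolynomial (Fin p) ℝ)) * ∏ i ∈ Sᶜ, MvPolynomial.X (part i) :=
            Finset.prod_mul_distrib
        _ = MvPolynomial.C ((-1 : ℝ) ^ Sᶜ.card) *
            MvPolynomial.monomial (∑ i ∈ Sᶜ, Finsupp.single (part i) 1) 1 := by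
            rw [Finset.prod_const, MvPolynomial.monomial_sum_one, map_pow, map_neg, map_one]
            rfl
    rw [hprod, MvPolynomial.coeff_C_mul, MvPolynomial.coeff_C_mul, MvPolynomial.coeff_monomial]
    have hcard : ∀ l, (S.filter (fun i => part i = l)).card
        + (Sᶜ.filter (fun i => part i = l)).card = mi l := by
      intro l
      rw [← hmi l, ← Finset.card_union_of_disjoint
        (Finset.disjoint_filter_filter disjoint_compl_right), ← Finset.filter_union,
        Finset.union_compl]
    have hd : ∀ l, (∑ i ∈ Sᶜ, Finsupp.single (part i) 1) l
        = (Sᶜ.filter (fun i => part i = l)).card := by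
      intro l
      rw [Finset.card_filter, Finsupp.finset_sum_apply]
      exact Finset.sum_congr rfl fun i _ => by rw [Finsupp.single_apply]
    have hiff : ((∑ i ∈ Sᶜ, Finsupp.single (part i) 1) = μ)
        ↔ (∀ l, (S.filter (fun i => part i = l)).card = ki l) := by
      rw [DFunLike.ext_iff]
      constructor
      · intro h l
        have := h l
        rw [hd l] at this
        simp only [hμ, Finsupp.coe_equivFunOnFinite_symm] at this
        have := hcard l; have := hki l; omega
      · intro h l
        rw [hd l]
        simp only [hμ, Finsupp.coe_equivFunOnFinite_symm]
        have := hcard l; have := h l; have := hki l; omega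
    by_cases hc : ∀ l, (S.filter (fun i => part i = l)).card = ki l
    · rw [if_pos (hiff.mpr hc), if_pos hc]
      have hScard : S.card = ∑ l, ki l := by
        rw [Finset.card_eq_sum_card_fiberwise (f := part) (t := Finset.univ)
          (fun x _ => Finset.mem_univ _)]
        exact Finset.sum_congr rfl fun l _ => hc l
      have : Sᶜ.card = m - ∑ l, ki l := by
        rw [Finset.card_compl, hScard, Fintype.card_fin]
      rw [this]; ring
    · rw [if_neg (fun h => hc (hiff.mp h)), if_neg hc, mul_zero, mul_zero]
  calc (∑ S : Finset (Fin m), MvPolynomial.coeff μ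
          (MvPolynomial.C (Matrix.det ((A * Aᵀ).submatrix (fun i : {x // x ∈ S} => i.1)
            (fun j : {x // x ∈ S} => j.1))) * ∏ i ∈ Sᶜ, (-MvPolynomial.X (part i))))
      = ∑ S : Finset (Fin m),
          if (∀ l, (S.filter (fun i => part i = l)).card = ki l) then
            (-1 : ℝ) ^ (m - ∑ l, ki l) * subDet A S else 0 :=
        Finset.sum_congr rfl fun S _ => key S
    _ = ∑ S ∈ Finset.univ.filter
          (fun S : Finset (Fin m) => ∀ l, (S.filter (fun i => part i = l)).card = ki l),
          (-1 : ℝ) ^ (m - ∑ l, ki l) * subDet A S := (Finset.sum_filter _ _).symm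
    _ = (-1 : ℝ) ^ (m - ∑ l, ki l) * ∑ S ∈ Finset.univ.filter
          (fun S : Finset (Fin m) => ∀ l, (S.filter (fun i => part i = l)).card = ki l),
          subDet A S := by rw [Finset.mul_sum]
end

section
/- Let $A \in \mathbb{R}^{m \times n}$ and let $[m] = \mathcal{P}_1 \uplus \cdots \uplus \mathcal{P}_p$ be a partition into disjoint parts. Every coefficient $c_{i_1,\dots,i_p}$ of the multivariate characteristic polynomial $\det(AA^T - x_1 I_1 - \cdots - x_p I_p)$ satisfies $(-1)^{i_1 + \cdots + i_p} c_{i_1,\dots,i_p} \ge 0$; that is, the sign of each coefficient is determined by the parity of the total degree of its monomial. -/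
open scoped Matrix

open MvPolynomial

lemma psd_det_nonneg {ι : Type*} [Fintype ι] [DecidableEq ι]
    {M : Matrix ι ι ℝ} (hM : M.PosSemidef) :
    0 ≤ M.det := by
  rw [hM.isHermitian.det_eq_prod_eigenvalues]
  exact Finset.prod_nonneg fun i _ => by simpa using hM.eigenvalues_nonneg i

lemma piecewise_mat_mem {α R : Type*} (s : Finset α) [∀ j, Decidable (j ∈ s)]
    (f g : Matrix α α R) {i : α} (h : i ∈ s) : s.piecewise f g i = f i := by
  simp [Finset.piecewise, h]

lemma piecewise_mat_notMem {α R : Type*} (s : Finset α) [∀ j, Decidable (j ∈ s)]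
    (f g : Matrix α α R) {i : α} (h : i ∉ s) : s.piecewise f g i = g i := by
  simp [Finset.piecewise, h]

lemma det_piecewise_one {m : ℕ} {R : Type*} [CommRing R]
    (N : Matrix (Fin m) (Fin m) R) (s : Finset (Fin m)) :
    Matrix.det (Matrix.of (s.piecewise (1 : Matrix (Fin m) (Fin m) R) N)) =
      Matrix.det (N.submatrix
        (fun i : {i // ¬ i ∈ s} => (i : Fin m)) (fun i : {i // ¬ i ∈ s} => (i : Fin m))) := by
  classical
  let eqv : {i // i ∈ s} ⊕ {i // ¬ i ∈ s} ≃ Fin m := Equiv.sumCompl (· ∈ s)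
  rw [← Matrix.det_submatrix_equiv_self eqv]
  have h2 : (Matrix.of (s.piecewise (1 : Matrix (Fin m) (Fin m) R) N)).submatrix eqv eqv =
      Matrix.fromBlocks 1 0
        (Matrix.of fun (i : {i // ¬ i ∈ s}) (j : {i // i ∈ s}) => N i j)
        (N.submatrix (fun i : {i // ¬ i ∈ s} => (i : Fin m)) (fun i : {i // ¬ i ∈ s} => (i : Fin m))) := by
    ext (i | i) (j | j) <;>
      simp only [Matrix.submatrix_apply, Matrix.fromBlocks_apply₁₁, Matrix.fromBlocks_apply₁₂,
        Matrix.fromBlocks_apply₂₁, Matrix.fromBlocks_apply₂₂, eqv, Equiv.sumCompl_apply_inl,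
        Equiv.sumCompl_apply_inr, Matrix.of_apply]
    · rw [piecewise_mat_mem _ _ _ i.2, Matrix.one_apply, Matrix.one_apply]
      exact if_congr Subtype.ext_iff.symm rfl rfl
    · rw [piecewise_mat_mem _ _ _ i.2, Matrix.one_apply]
      have : (i : Fin m) ≠ (j : Fin m) := fun h => j.2 (h ▸ i.2)
      simp [this]
    · rw [piecewise_mat_notMem _ _ _ i.2]
    · rw [piecewise_mat_notMem _ _ _ i.2]
  rw [h2, Matrix.det_fromBlocks_zero₁₂, Matrix.det_one, one_mul]

lemma prod_X_eq_monomial {m p : ℕ} (part : Fin m → Fin p) (s : Finset (Fin m)) :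
    (∏ i ∈ s, (X (part i) : MvPolynomial (Fin p) ℝ)) =
      monomial (∑ i ∈ s, Finsupp.single (part i) 1) 1 := by
  classical
  induction s using Finset.induction with
  | empty => simp
  | insert _ _ h ih =>
    rw [Finset.prod_insert h, Finset.sum_insert h, ih, X, monomial_mul, one_mul]

/-- every coefficient `c_{i₁,…,i_p}` of the multivariate characteristic polynomial
`det(AA^T - x₁I₁ - ⋯ - x_pI_p)` satisfies `(-1)^{i₁+⋯+i_p} c_{i₁,…,i_p} ≥ 0`. -/
theorem statement3 {m n p : ℕ} (A : Matrix (Fin m) (Fin n) ℝ) (part : Fin m → Fin p)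
    (e : Fin p → ℕ) :
    0 ≤ (-1 : ℝ) ^ (∑ l, e l) * mcharCoeff (A * Aᵀ) part e := by
  classical
  set M : Matrix (Fin m) (Fin m) ℝ := A * Aᵀ with hMdef
  have hMpsd : M.PosSemidef := by
    have := Matrix.posSemidef_self_mul_conjTranspose A
    rwa [Matrix.conjTranspose_eq_transpose_of_trivial] at this
  set Rp := MvPolynomial (Fin p) ℝ
  let N : Matrix (Fin m) (Fin m) Rp := M.map MvPolynomial.C
  let D : Matrix (Fin m) (Fin m) Rp := Matrix.diagonal fun i => -X (part i)
  -- the minor of M on the complement of s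
  let c : Finset (Fin m) → ℝ := fun s =>
    Matrix.det (M.submatrix (fun i : {i // ¬ i ∈ s} => (i : Fin m))
      (fun i : {i // ¬ i ∈ s} => (i : Fin m)))
  have hc : ∀ s, 0 ≤ c s := fun s => psd_det_nonneg (hMpsd.submatrix _)
  have hB : (Matrix.of fun i j =>
      MvPolynomial.C (M i j) - (if i = j then (X (part i) : Rp) else 0)) = D + N := by
    apply Matrix.ext
    intro i j
    by_cases h : i = j <;>
      simp [D, N, Matrix.add_apply, Matrix.diagonal_apply, h, sub_eq_neg_add]
  have h1 : (D + N).det = ∑ s : Finset (Fin m),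
      Matrix.det (Matrix.of (s.piecewise D N)) := by
    exact (Matrix.detRowAlternating (R := Rp) (n := Fin m)).toMultilinearMap.map_add_univ D N
  have h2 : ∀ s : Finset (Fin m), Matrix.det (Matrix.of (s.piecewise D N)) =
      (∏ i ∈ s, (-X (part i) : Rp)) * MvPolynomial.C (c s) := by
    intro s
    have hsc : s.piecewise D N =
        s.piecewise (fun i => (-X (part i) : Rp) •
          (s.piecewise (1 : Matrix (Fin m) (Fin m) Rp) N) i)
          (s.piecewise (1 : Matrix (Fin m) (Fin m) Rp) N) := by
      apply Matrix.ext
      intro i j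
      by_cases h : i ∈ s
      · rw [Finset.piecewise_eq_of_mem _ _ _ h, piecewise_mat_mem _ _ _ h]
        simp only [Pi.smul_apply, piecewise_mat_mem _ _ _ h]
        by_cases hij : i = j <;>
          simp [D, Matrix.diagonal_apply, Matrix.one_apply, hij]
      · simp [piecewise_mat_notMem _ _ _ h, Finset.piecewise_eq_of_notMem _ _ _ h]
    have hml := (Matrix.detRowAlternating (R := Rp) (n := Fin m)).toMultilinearMap.map_piecewise_smul
      (fun i => (-X (part i) : Rp)) (s.piecewise (1 : Matrix (Fin m) (Fin m) Rp) N) s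
    have hdet1 : Matrix.det (Matrix.of (s.piecewise D N)) =
        (∏ i ∈ s, (-X (part i) : Rp)) *
          Matrix.det (Matrix.of (s.piecewise (1 : Matrix (Fin m) (Fin m) Rp) N)) := by
      rw [hsc]
      simp [smul_eq_mul] at hml ⊢; exact hml
    rw [hdet1, det_piecewise_one]
    congr 1
    have : N.submatrix (fun i : {i // ¬ i ∈ s} => (i : Fin m))
        (fun i : {i // ¬ i ∈ s} => (i : Fin m)) =
        (M.submatrix (fun i : {i // ¬ i ∈ s} => (i : Fin m))
          (fun i : {i // ¬ i ∈ s} => (i : Fin m))).map MvPolynomial.C := rfl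
    rw [this, ← RingHom.mapMatrix_apply, ← RingHom.map_det]
  -- now compute the coefficient
  set d : Fin p →₀ ℕ := Finsupp.equivFunOnFinite.symm e with hd
  have hcoeff : mcharCoeff M part e =
      ∑ s : Finset (Fin m),
        (if (∑ i ∈ s, Finsupp.single (part i) 1) = d then c s * (-1 : ℝ) ^ s.card else 0) := by
    rw [mcharCoeff, hB, h1]
    rw [coeff_sum]
    refine Finset.sum_congr rfl fun s _ => ?_
    rw [h2 s]
    have hprod : (∏ i ∈ s, (-X (part i) : Rp)) =
        monomial (∑ i ∈ s, Finsupp.single (part i) 1) ((-1 : ℝ) ^ s.card) := by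
      calc (∏ i ∈ s, (-X (part i) : Rp))
          = ∏ i ∈ s, ((-1 : Rp) * X (part i)) := by simp only [neg_one_mul]
        _ = (-1 : Rp) ^ s.card * ∏ i ∈ s, (X (part i) : Rp) := by
            rw [Finset.prod_mul_distrib, Finset.prod_const]
        _ = C ((-1 : ℝ) ^ s.card) * monomial (∑ i ∈ s, Finsupp.single (part i) 1) 1 := by
            rw [prod_X_eq_monomial]; congr 1; simp
        _ = monomial (∑ i ∈ s, Finsupp.single (part i) 1) ((-1 : ℝ) ^ s.card) := by
            rw [C_mul_monomial, mul_one]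
    rw [hprod, mul_comm, C_mul_monomial, coeff_monomial]
  rw [hcoeff, Finset.mul_sum]
  refine Finset.sum_nonneg fun s _ => ?_
  by_cases h : (∑ i ∈ s, Finsupp.single (part i) 1) = d
  · have hcard : s.card = ∑ l, e l := by
      have h1 : ∑ l, (∑ i ∈ s, Finsupp.single (part i) (1 : ℕ)) l = ∑ l, e l := by
        rw [h, hd]
        refine Finset.sum_congr rfl fun l _ => ?_
        simp
      calc s.card = ∑ i ∈ s, (1 : ℕ) := by simp
        _ = ∑ i ∈ s, ∑ l, (Finsupp.single (part i) (1 : ℕ)) l := by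
            refine Finset.sum_congr rfl fun i _ => ?_
            rw [Finset.sum_eq_single (part i)] <;>
              simp +contextual [Finsupp.single_apply, eq_comm]
        _ = ∑ l, (∑ i ∈ s, Finsupp.single (part i) (1 : ℕ)) l := by
            rw [Finset.sum_comm]
            refine Finset.sum_congr rfl fun l _ => ?_
            simp [Finset.sum_apply']
        _ = ∑ l, e l := h1
    rw [if_pos h, hcard]
    have : (-1 : ℝ) ^ (∑ l, e l) * (c s * (-1 : ℝ) ^ (∑ l, e l)) =
        c s * ((-1 : ℝ) ^ (∑ l, e l)) ^ 2 := by ring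
    rw [this]
    exact mul_nonneg (hc s) (sq_nonneg _)
  · rw [if_neg h, mul_zero]
end
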